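/- There is a universal constant C ∈ (0,∞) such that for every p ∈ [1,∞), every n ∈ ℕ, every metric space (M,d_M), and every finitely supported f : ℍ → M (i.e., there exists m₀ ∈ M with f(x) = m₀ for all but finitely many x ∈ ℍ), ∑_{y ∈ ℍ} ∑_{z ∈ B_n} d_M(f(yz),f(y))^p ≤ C n^{p+4} ∑_{x ∈ ℍ} (d_M(f(xa),f(x))^p + d_M(f(xb),f(x))^p). -/

import Mathlib

/-- The discrete Heisenberg group, as ℤ³ with the Heisenberg multiplication
(equivalently, unit upper-triangular 3×3 integer matrices). -/
@[ext]
structure DH where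
  x : ℤ
  y : ℤ
  z : ℤ

namespace DH

instance : Mul DH := ⟨fun a b => ⟨a.x + b.x, a.y + b.y, a.z + b.z + a.x * b.y⟩⟩
instance : One DH := ⟨⟨0, 0, 0⟩⟩
instance : Inv DH := ⟨fun a => ⟨-a.x, -a.y, -a.z + a.x * a.y⟩⟩

lemma mul_def (a b : DH) : a * b = ⟨a.x + b.x, a.y + b.y, a.z + b.z + a.x * b.y⟩ := rfl
lemma one_def : (1 : DH) = ⟨0, 0, 0⟩ := rfl
lemma inv_def (a : DH) : a⁻¹ = ⟨-a.x, -a.y, -a.z + a.x * a.y⟩ := rfl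

instance : Group DH where
  mul_assoc a b c := by
    simp only [mul_def, mk.injEq]
    refine ⟨by ring, by ring, by ring⟩
  one_mul a := by simp [mul_def, one_def]
  mul_one a := by simp [mul_def, one_def]
  inv_mul_cancel a := by
    simp only [mul_def, inv_def, one_def, mk.injEq]
    refine ⟨by ring, by ring, by ring⟩

/-- The generator `a`. -/
def gA : DH := ⟨1, 0, 0⟩

/-- The generator `b`. -/
def gB : DH := ⟨0, 1, 0⟩

/-- The commutator `c = aba⁻¹b⁻¹`, a generator of the center. -/
def gC : DH := gA * gB * gA⁻¹ * gB⁻¹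

/-- Word length with respect to the symmetric generating set `{a, b, a⁻¹, b⁻¹}`. -/
noncomputable def wordLen (g : DH) : ℕ :=
  sInf {n | ∃ l : List DH, l.length = n ∧
    (∀ s ∈ l, s ∈ ({gA, gB, gA⁻¹, gB⁻¹} : Set DH)) ∧ l.prod = g}

/-- The left-invariant word metric on the discrete Heisenberg group. -/
noncomputable def dW (g h : DH) : ℕ := wordLen (g⁻¹ * h)

/-- The closed ball of radius `n` centered at the identity. -/
def Ball (n : ℕ) : Set DH := {g | dW g 1 ≤ n}

end DH
namespace DH

lemma gA_inv : gA⁻¹ = ⟨-1, 0, 0⟩ := by simp [inv_def, gA]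
lemma gB_inv : gB⁻¹ = ⟨0, -1, 0⟩ := by simp [inv_def, gB]

/-- The symmetric generating set. -/
def Gens : Set DH := {gA, gB, gA⁻¹, gB⁻¹}

lemma pow_xx (m : ℤ) : ∀ k : ℕ, (⟨m, 0, 0⟩ : DH) ^ k = ⟨m * k, 0, 0⟩
  | 0 => by simp [one_def, pow_zero]
  | k + 1 => by
    rw [pow_succ, pow_xx m k, mul_def]
    simp only [mk.injEq]
    push_cast
    refine ⟨by ring, trivial, by ring⟩

lemma pow_yy (m : ℤ) : ∀ k : ℕ, (⟨0, m, 0⟩ : DH) ^ k = ⟨0, m * k, 0⟩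
  | 0 => by simp [one_def, pow_zero]
  | k + 1 => by
    rw [pow_succ, pow_yy m k, mul_def]
    simp only [mk.injEq]
    push_cast
    refine ⟨trivial, by ring, by ring⟩

lemma pow_zz (m : ℤ) : ∀ k : ℕ, (⟨0, 0, m⟩ : DH) ^ k = ⟨0, 0, m * k⟩
  | 0 => by simp [one_def, pow_zero]
  | k + 1 => by
    rw [pow_succ, pow_zz m k, mul_def]
    simp only [mk.injEq]
    push_cast
    refine ⟨trivial, trivial, by ring⟩

lemma exists_word_x (m : ℤ) : ∃ l : List DH, (∀ s ∈ l, s ∈ Gens) ∧ l.prod = ⟨m, 0, 0⟩ := by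
  rcases le_or_gt 0 m with h | h
  · refine ⟨List.replicate m.toNat gA, by simp [Gens], ?_⟩
    rw [List.prod_replicate, gA, pow_xx]
    simp [Int.toNat_of_nonneg h]
  · refine ⟨List.replicate m.natAbs gA⁻¹, by simp [Gens], ?_⟩
    rw [List.prod_replicate, gA_inv, pow_xx]
    have h1 : ((m.natAbs : ℤ)) = -m := by omega
    rw [h1]
    refine DH.ext ?_ ?_ ?_ <;> simp

lemma exists_word_y (m : ℤ) : ∃ l : List DH, (∀ s ∈ l, s ∈ Gens) ∧ l.prod = ⟨0, m, 0⟩ := by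
  rcases le_or_gt 0 m with h | h
  · refine ⟨List.replicate m.toNat gB, by simp [Gens], ?_⟩
    rw [List.prod_replicate, gB, pow_yy]
    simp [Int.toNat_of_nonneg h]
  · refine ⟨List.replicate m.natAbs gB⁻¹, by simp [Gens], ?_⟩
    rw [List.prod_replicate, gB_inv, pow_yy]
    have h1 : ((m.natAbs : ℤ)) = -m := by omega
    rw [h1]
    refine DH.ext ?_ ?_ ?_ <;> simp

lemma cword_prod : ([gA, gB, gA⁻¹, gB⁻¹] : List DH).prod = ⟨0, 0, 1⟩ := by
  simp only [List.prod_cons, List.prod_nil, mul_one]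
  rw [gA_inv, gB_inv, gA, gB]
  simp only [mul_def, mk.injEq]
  norm_num

lemma cword_inv_prod : ([gB, gA, gB⁻¹, gA⁻¹] : List DH).prod = ⟨0, 0, -1⟩ := by
  simp only [List.prod_cons, List.prod_nil, mul_one]
  rw [gA_inv, gB_inv, gA, gB]
  simp only [mul_def, mk.injEq]
  norm_num

lemma exists_word_z (m : ℤ) : ∃ l : List DH, (∀ s ∈ l, s ∈ Gens) ∧ l.prod = ⟨0, 0, m⟩ := by
  rcases le_or_gt 0 m with h | h
  · refine ⟨(List.replicate m.toNat ([gA, gB, gA⁻¹, gB⁻¹] : List DH)).flatten, ?_, ?_⟩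
    · intro s hs
      rcases List.mem_flatten.1 hs with ⟨t, ht, hst⟩
      rw [List.eq_of_mem_replicate ht] at hst
      simp only [List.mem_cons, List.not_mem_nil, or_false] at hst
      rcases hst with rfl | rfl | rfl | rfl <;> simp [Gens]
    · rw [List.prod_flatten, List.map_replicate, List.prod_replicate, cword_prod, pow_zz]
      simp [Int.toNat_of_nonneg h]
  · refine ⟨(List.replicate m.natAbs ([gB, gA, gB⁻¹, gA⁻¹] : List DH)).flatten, ?_, ?_⟩
    · intro s hs
      rcases List.mem_flatten.1 hs with ⟨t, ht, hst⟩
      rw [List.eq_of_mem_replicate ht] at hst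
      simp only [List.mem_cons, List.not_mem_nil, or_false] at hst
      rcases hst with rfl | rfl | rfl | rfl <;> simp [Gens]
    · rw [List.prod_flatten, List.map_replicate, List.prod_replicate, cword_inv_prod, pow_zz]
      have h1 : ((m.natAbs : ℤ)) = -m := by omega
      rw [h1]
      refine DH.ext ?_ ?_ ?_ <;> simp

lemma exists_word (g : DH) : ∃ l : List DH, (∀ s ∈ l, s ∈ Gens) ∧ l.prod = g := by
  obtain ⟨lx, hlx, hpx⟩ := exists_word_x g.x
  obtain ⟨ly, hly, hpy⟩ := exists_word_y g.y
  obtain ⟨lz, hlz, hpz⟩ := exists_word_z (g.z - g.x * g.y)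
  refine ⟨lx ++ ly ++ lz, ?_, ?_⟩
  · intro s hs
    rcases List.mem_append.1 hs with hs | hs
    · rcases List.mem_append.1 hs with hs | hs
      · exact hlx s hs
      · exact hly s hs
    · exact hlz s hs
  · rw [List.prod_append, List.prod_append, hpx, hpy, hpz]
    simp only [mul_def]
    refine DH.ext ?_ ?_ ?_ <;> simp <;> ring

lemma inv_mem_gens {s : DH} (hs : s ∈ Gens) : s⁻¹ ∈ Gens := by
  rcases hs with rfl | rfl | rfl | rfl
  · exact Or.inr (Or.inr (Or.inl rfl))
  · exact Or.inr (Or.inr (Or.inr rfl))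
  · simp [Gens]
  · simp [Gens]

lemma exists_short_word {n : ℕ} {g : DH} (hg : g ∈ Ball n) :
    ∃ l : List DH, l.length ≤ n ∧ (∀ s ∈ l, s ∈ Gens) ∧ l.prod = g := by
  have hg' : wordLen g⁻¹ ≤ n := by simpa [Ball, dW, mul_one] using hg
  set S : Set ℕ := {k | ∃ l : List DH, l.length = k ∧
    (∀ s ∈ l, s ∈ ({gA, gB, gA⁻¹, gB⁻¹} : Set DH)) ∧ l.prod = g⁻¹} with hS
  have hne : S.Nonempty := by
    obtain ⟨l, hl, hp⟩ := exists_word g⁻¹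
    exact ⟨l.length, l, rfl, hl, hp⟩
  have hmem : wordLen g⁻¹ ∈ S := Nat.sInf_mem hne
  obtain ⟨l, hlen, hgens, hprod⟩ := hmem
  refine ⟨(l.map fun x => x⁻¹).reverse, ?_, ?_, ?_⟩
  · rw [List.length_reverse, List.length_map, hlen]; exact hg'
  · intro s hs
    rw [List.mem_reverse] at hs
    rcases List.mem_map.1 hs with ⟨t, ht, rfl⟩
    exact inv_mem_gens (hgens t ht)
  · rw [← List.prod_inv_reverse, hprod, inv_inv]

end DH
namespace DH

lemma gen_bound {s : DH} (hs : s ∈ Gens) : |s.x| ≤ 1 ∧ |s.y| ≤ 1 ∧ s.z = 0 := by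
  rcases hs with rfl | rfl | rfl | rfl <;>
    norm_num [inv_def, gA, gB]

lemma prod_bound : ∀ l : List DH, (∀ s ∈ l, s ∈ Gens) →
    |l.prod.x| ≤ (l.length : ℤ) ∧ |l.prod.y| ≤ (l.length : ℤ) ∧
      |l.prod.z| ≤ (l.length : ℤ) ^ 2
  | [], _ => by simp [one_def]
  | s :: t, h => by
    have ht := prod_bound t (fun u hu => h u (List.mem_cons_of_mem _ hu))
    have hs := gen_bound (h s (List.mem_cons_self))
    obtain ⟨h1, h2, h3⟩ := ht
    obtain ⟨g1, g2, g3⟩ := hs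
    rw [List.prod_cons, List.length_cons]
    have hx : (s * t.prod).x = s.x + t.prod.x := rfl
    have hy : (s * t.prod).y = s.y + t.prod.y := rfl
    have hz : (s * t.prod).z = s.z + t.prod.z + s.x * t.prod.y := rfl
    push_cast
    refine ⟨?_, ?_, ?_⟩
    · rw [hx]
      calc |s.x + t.prod.x| ≤ |s.x| + |t.prod.x| := abs_add_le _ _
        _ ≤ (t.length : ℤ) + 1 := by linarith
    · rw [hy]
      calc |s.y + t.prod.y| ≤ |s.y| + |t.prod.y| := abs_add_le _ _
        _ ≤ (t.length : ℤ) + 1 := by linarith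
    · rw [hz, g3, zero_add]
      calc |t.prod.z + s.x * t.prod.y| ≤ |t.prod.z| + |s.x * t.prod.y| := abs_add_le _ _
        _ = |t.prod.z| + |s.x| * |t.prod.y| := by rw [abs_mul]
        _ ≤ ((t.length : ℤ) + 1) ^ 2 := by nlinarith [abs_nonneg t.prod.y, abs_nonneg s.x]

/-- The coordinates of elements of `Ball n` as an equiv with triples. -/
def tripleEquiv : ℤ × ℤ × ℤ ≃ DH where
  toFun t := ⟨t.1, t.2.1, t.2.2⟩
  invFun g := (g.x, g.y, g.z)
  left_inv _ := rfl
  right_inv _ := rfl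

/-- A finite box containing `Ball n`. -/
noncomputable def boxF (n : ℕ) : Finset DH :=
  ((Finset.Icc (-(n : ℤ)) n) ×ˢ (Finset.Icc (-(n : ℤ)) n) ×ˢ
    (Finset.Icc (-((n : ℤ) ^ 2)) ((n : ℤ) ^ 2))).map tripleEquiv.toEmbedding

lemma ball_subset_box (n : ℕ) : Ball n ⊆ ↑(boxF n) := by
  intro g hg
  obtain ⟨l, hlen, hgens, hprod⟩ := exists_short_word hg
  obtain ⟨h1, h2, h3⟩ := prod_bound l hgens
  rw [hprod] at h1 h2 h3
  have hlen' : (l.length : ℤ) ≤ (n : ℤ) := by exact_mod_cast hlen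
  have hx := h1.trans hlen'
  have hy := h2.trans hlen'
  have hz : |g.z| ≤ (n : ℤ) ^ 2 := h3.trans (by nlinarith [abs_nonneg g.z, Int.natCast_nonneg l.length])
  rw [boxF, Finset.coe_map]
  refine ⟨(g.x, g.y, g.z), ?_, rfl⟩
  simp only [Finset.coe_product, Set.mem_prod, Finset.mem_coe, Finset.mem_Icc]
  rw [abs_le] at hx hy hz
  exact ⟨⟨hx.1, hx.2⟩, ⟨hy.1, hy.2⟩, ⟨hz.1, hz.2⟩⟩

lemma ball_finite (n : ℕ) : (Ball n).Finite :=
  Set.Finite.subset (boxF n).finite_toSet (ball_subset_box n)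

lemma card_boxF (n : ℕ) : (boxF n).card = (2 * n + 1) * ((2 * n + 1) * (2 * n ^ 2 + 1)) := by
  rw [boxF, Finset.card_map, Finset.card_product, Finset.card_product,
    Int.card_Icc, Int.card_Icc]
  have e1 : ((n : ℤ) + 1 - -(n : ℤ)).toNat = 2 * n + 1 := by omega
  have e2 : (((n : ℤ) ^ 2) + 1 - -((n : ℤ) ^ 2)).toNat = 2 * n ^ 2 + 1 := by
    have : ((n : ℤ)) ^ 2 = ((n ^ 2 : ℕ) : ℤ) := by push_cast; ring
    rw [this]; omega
  rw [e1, e2]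

lemma dist_prod_le {M : Type} [MetricSpace M] (f : DH → M) :
    ∀ (l : List DH) (y : DH),
      dist (f (y * l.prod)) (f y) ≤ ∑ i ∈ Finset.range l.length,
        dist (f (y * (l.take (i + 1)).prod)) (f (y * (l.take i).prod))
  | [], y => by simp
  | s :: t, y => by
    have ih := dist_prod_le f t (y * s)
    rw [List.length_cons, Finset.sum_range_succ']
    have hterm : ∀ i : ℕ, dist (f (y * ((s :: t).take (i + 1 + 1)).prod))
        (f (y * ((s :: t).take (i + 1)).prod)) =
        dist (f (y * s * (t.take (i + 1)).prod)) (f (y * s * (t.take i).prod)) := by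
      intro i
      rw [List.take_succ_cons, List.take_succ_cons, List.prod_cons, List.prod_cons,
        ← mul_assoc, ← mul_assoc]
    have e0 : dist (f (y * ((s :: t).take (0 + 1)).prod)) (f (y * ((s :: t).take 0).prod))
        = dist (f (y * s)) (f y) := by
      simp [List.take_succ_cons]
    rw [Finset.sum_congr rfl fun i _ => hterm i, e0]
    refine le_trans ?_ (add_le_add_left ih _)
    rw [List.prod_cons, ← mul_assoc]
    exact dist_triangle _ _ _

end DH
open DH in
/-- Lemma 3.4: the global Poincaré-type inequality on the discrete Heisenberg group,
for finitely supported functions with values in a metric space. -/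
theorem global_poincare_metric_space :
    ∃ C : ℝ, 0 < C ∧
      ∀ p : ℝ, 1 ≤ p → ∀ (n : ℕ) (M : Type) [MetricSpace M] (f : DH → M),
        (∃ m₀ : M, {x : DH | f x ≠ m₀}.Finite) →
        ∑' y : DH, ∑' z : Ball n, dist (f (y * ↑z)) (f y) ^ p ≤
          C * (n : ℝ) ^ (p + 4) *
            ∑' x : DH, (dist (f (x * gA)) (f x) ^ p + dist (f (x * gB)) (f x) ^ p) := by
  classical
  refine ⟨27, by norm_num, ?_⟩
  intro p hp n M _ f hfin
  obtain ⟨m₀, hsupp⟩ := hfin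
  have hp0 : p ≠ 0 := by linarith
  rcases Nat.eq_zero_or_pos n with rfl | hn
  · -- trivial case n = 0
    have hz1 : ∀ z : DH, z ∈ Ball 0 → z = 1 := by
      intro z hz
      obtain ⟨l, hlen, _, hprod⟩ := exists_short_word hz
      have hl : l = [] := List.length_eq_zero_iff.1 (Nat.le_zero.1 hlen)
      rw [hl] at hprod
      simpa using hprod.symm
    have h0 : ∀ y : DH, ∑' z : (Ball 0), dist (f (y * ↑z)) (f y) ^ p = 0 := by
      intro y
      have hterm : ∀ z : (Ball 0), dist (f (y * ↑z)) (f y) ^ p = 0 := by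
        intro z
        rw [hz1 ↑z z.2, mul_one, dist_self, Real.zero_rpow hp0]
      rw [tsum_congr hterm, tsum_zero]
    rw [tsum_congr h0, tsum_zero]
    have h4 : ((0:ℕ):ℝ) ^ (p + 4) = 0 := by
      rw [Nat.cast_zero, Real.zero_rpow (by linarith)]
    rw [h4, mul_zero, zero_mul]
  · -- main case n ≥ 1
    have hn0 : (0:ℝ) < (n:ℝ) := by exact_mod_cast hn
    set s : Finset DH := hsupp.toFinset with hs_def
    have hmem_s : ∀ x : DH, f x ≠ m₀ → x ∈ s := fun x hx => hsupp.mem_toFinset.2 hx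
    have hnot_s : ∀ x : DH, x ∉ s → f x = m₀ := fun x hx => by
      by_contra h; exact hx (hmem_s x h)
    set Bfin : Finset DH := (ball_finite n).toFinset with hB_def
    have hBfin : ∀ z : DH, z ∈ Bfin ↔ z ∈ Ball n := fun z => (ball_finite n).mem_toFinset
    -- inner tsum conversion
    have hinner : ∀ y : DH, ∑' z : (Ball n), dist (f (y * ↑z)) (f y) ^ p
        = ∑ z ∈ Bfin, dist (f (y * z)) (f y) ^ p := by
      intro y
      rw [tsum_subtype (Ball n) (fun w => dist (f (y * w)) (f y) ^ p),
        tsum_eq_sum (s := Bfin)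
          (fun z hz => Set.indicator_of_notMem (fun h => hz ((hBfin z).2 h)) _)]
      exact Finset.sum_congr rfl fun z hz => Set.indicator_of_mem ((hBfin z).1 hz) _
    -- support finsets
    set U : Finset DH := (s ∪ s.image (· * gA⁻¹)) ∪ s.image (· * gB⁻¹) with hU_def
    set Sig : ℝ := ∑ x ∈ U, (dist (f (x * gA)) (f x) ^ p + dist (f (x * gB)) (f x) ^ p)
      with hSig_def
    have hq0 : ∀ (g : DH) (w : DH), (0:ℝ) ≤ dist (f (w * g)) (f w) ^ p :=
      fun g w => Real.rpow_nonneg dist_nonneg p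
    have hSig0 : 0 ≤ Sig :=
      Finset.sum_nonneg fun x _ => add_nonneg (hq0 gA x) (hq0 gB x)
    have hUA : ∀ w : DH, dist (f (w * gA)) (f w) ^ p ≠ 0 → w ∈ U := by
      intro w hw
      by_cases h1 : f w = m₀
      · have h2 : f (w * gA) ≠ m₀ := by
          intro h2
          exact hw (by rw [h1, h2, dist_self, Real.zero_rpow hp0])
        exact Finset.mem_union_left _ (Finset.mem_union_right _
          (Finset.mem_image.2 ⟨w * gA, hmem_s _ h2, by rw [mul_inv_cancel_right]⟩))
      · exact Finset.mem_union_left _ (Finset.mem_union_left _ (hmem_s w h1))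
    have hUB : ∀ w : DH, dist (f (w * gB)) (f w) ^ p ≠ 0 → w ∈ U := by
      intro w hw
      by_cases h1 : f w = m₀
      · have h2 : f (w * gB) ≠ m₀ := by
          intro h2
          exact hw (by rw [h1, h2, dist_self, Real.zero_rpow hp0])
        exact Finset.mem_union_right _
          (Finset.mem_image.2 ⟨w * gB, hmem_s _ h2, by rw [mul_inv_cancel_right]⟩)
      · exact Finset.mem_union_left _ (Finset.mem_union_left _ (hmem_s w h1))
    have hsumA : ∀ W : Finset DH, (∑ w ∈ W, dist (f (w * gA)) (f w) ^ p) ≤ Sig := by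
      intro W
      have h1 : (∑ w ∈ W, dist (f (w * gA)) (f w) ^ p)
          ≤ ∑ w ∈ W ∪ U, dist (f (w * gA)) (f w) ^ p :=
        Finset.sum_le_sum_of_subset_of_nonneg Finset.subset_union_left
          (fun x _ _ => hq0 gA x)
      have h2 : (∑ w ∈ W ∪ U, dist (f (w * gA)) (f w) ^ p)
          = ∑ w ∈ U, dist (f (w * gA)) (f w) ^ p := by
        refine (Finset.sum_subset Finset.subset_union_right ?_).symm
        intro x _ hx
        by_contra h
        exact hx (hUA x h)
      have h3 : (∑ w ∈ U, dist (f (w * gA)) (f w) ^ p) ≤ Sig :=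
        Finset.sum_le_sum fun x _ => le_add_of_nonneg_right (hq0 gB x)
      linarith
    have hsumB : ∀ W : Finset DH, (∑ w ∈ W, dist (f (w * gB)) (f w) ^ p) ≤ Sig := by
      intro W
      have h1 : (∑ w ∈ W, dist (f (w * gB)) (f w) ^ p)
          ≤ ∑ w ∈ W ∪ U, dist (f (w * gB)) (f w) ^ p :=
        Finset.sum_le_sum_of_subset_of_nonneg Finset.subset_union_left
          (fun x _ _ => hq0 gB x)
      have h2 : (∑ w ∈ W ∪ U, dist (f (w * gB)) (f w) ^ p)
          = ∑ w ∈ U, dist (f (w * gB)) (f w) ^ p := by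
        refine (Finset.sum_subset Finset.subset_union_right ?_).symm
        intro x _ hx
        by_contra h
        exact hx (hUB x h)
      have h3 : (∑ w ∈ U, dist (f (w * gB)) (f w) ^ p) ≤ Sig :=
        Finset.sum_le_sum fun x _ => le_add_of_nonneg_left (hq0 gA x)
      linarith
    have key : ∀ g ∈ Gens, ∀ W : Finset DH,
        (∑ w ∈ W, dist (f (w * g)) (f w) ^ p) ≤ Sig := by
      intro g hg W
      have hinj : ∀ (u : DH), ∀ x ∈ W, ∀ y ∈ W, x * u = y * u → x = y :=
        fun u x _ y _ h => mul_right_cancel h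
      rcases hg with rfl | rfl | rfl | rfl
      · exact hsumA W
      · exact hsumB W
      · have he : ∀ w : DH, dist (f (w * gA⁻¹)) (f w) ^ p
            = dist (f ((w * gA⁻¹) * gA)) (f (w * gA⁻¹)) ^ p := by
          intro w
          rw [inv_mul_cancel_right, dist_comm]
        calc (∑ w ∈ W, dist (f (w * gA⁻¹)) (f w) ^ p)
            = ∑ w ∈ W, dist (f ((w * gA⁻¹) * gA)) (f (w * gA⁻¹)) ^ p :=
              Finset.sum_congr rfl fun w _ => he w
          _ = ∑ w ∈ W.image (· * gA⁻¹), dist (f (w * gA)) (f w) ^ p :=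
              (Finset.sum_image (f := fun w => dist (f (w * gA)) (f w) ^ p)
                (hinj gA⁻¹)).symm
          _ ≤ Sig := hsumA _
      · have he : ∀ w : DH, dist (f (w * gB⁻¹)) (f w) ^ p
            = dist (f ((w * gB⁻¹) * gB)) (f (w * gB⁻¹)) ^ p := by
          intro w
          rw [inv_mul_cancel_right, dist_comm]
        calc (∑ w ∈ W, dist (f (w * gB⁻¹)) (f w) ^ p)
            = ∑ w ∈ W, dist (f ((w * gB⁻¹) * gB)) (f (w * gB⁻¹)) ^ p :=
              Finset.sum_congr rfl fun w _ => he w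
          _ = ∑ w ∈ W.image (· * gB⁻¹), dist (f (w * gB)) (f w) ^ p :=
              (Finset.sum_image (f := fun w => dist (f (w * gB)) (f w) ^ p)
                (hinj gB⁻¹)).symm
          _ ≤ Sig := hsumB _
    set T : Finset DH := s ∪ (s ×ˢ Bfin).image (fun q => q.1 * q.2⁻¹) with hT_def
    have keyz : ∀ z ∈ Bfin, (∑ y ∈ T, dist (f (y * z)) (f y) ^ p) ≤ (n:ℝ) ^ p * Sig := by
      intro z hz
      obtain ⟨l, hlen, hgens, hprod⟩ := exists_short_word ((hBfin z).1 hz)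
      have hpt : ∀ y : DH, dist (f (y * z)) (f y) ^ p ≤
          (n:ℝ) ^ (p - 1) * ∑ i ∈ Finset.range l.length,
            dist (f (y * (l.take (i+1)).prod)) (f (y * (l.take i).prod)) ^ p := by
        intro y
        have h1 : dist (f (y * z)) (f y) ≤ ∑ i ∈ Finset.range l.length,
            dist (f (y * (l.take (i+1)).prod)) (f (y * (l.take i).prod)) := by
          rw [← hprod]
          exact dist_prod_le f l y
        have h2 := Real.rpow_le_rpow dist_nonneg h1
          (by linarith : (0:ℝ) ≤ p)
        have h3 := Real.rpow_sum_le_const_mul_sum_rpow_of_nonneg (Finset.range l.length)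
          (f := fun i => dist (f (y * (l.take (i+1)).prod)) (f (y * (l.take i).prod))) hp
          (fun i _ => dist_nonneg)
        have hcard : (((Finset.range l.length).card : ℝ)) ^ (p - 1) ≤ (n:ℝ) ^ (p - 1) := by
          rw [Finset.card_range]
          exact Real.rpow_le_rpow (by positivity) (by exact_mod_cast hlen) (by linarith)
        have hsum0 : (0:ℝ) ≤ ∑ i ∈ Finset.range l.length,
            dist (f (y * (l.take (i+1)).prod)) (f (y * (l.take i).prod)) ^ p :=
          Finset.sum_nonneg fun i _ => Real.rpow_nonneg dist_nonneg p
        calc dist (f (y * z)) (f y) ^ p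
            ≤ (∑ i ∈ Finset.range l.length,
                dist (f (y * (l.take (i+1)).prod)) (f (y * (l.take i).prod))) ^ p := h2
          _ ≤ (((Finset.range l.length).card : ℝ)) ^ (p - 1) * ∑ i ∈ Finset.range l.length,
                dist (f (y * (l.take (i+1)).prod)) (f (y * (l.take i).prod)) ^ p := h3
          _ ≤ (n:ℝ) ^ (p - 1) * ∑ i ∈ Finset.range l.length,
                dist (f (y * (l.take (i+1)).prod)) (f (y * (l.take i).prod)) ^ p :=
              mul_le_mul_of_nonneg_right hcard hsum0
      calc (∑ y ∈ T, dist (f (y * z)) (f y) ^ p)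
          ≤ ∑ y ∈ T, (n:ℝ) ^ (p - 1) * ∑ i ∈ Finset.range l.length,
              dist (f (y * (l.take (i+1)).prod)) (f (y * (l.take i).prod)) ^ p :=
            Finset.sum_le_sum fun y _ => hpt y
        _ = (n:ℝ) ^ (p - 1) * ∑ i ∈ Finset.range l.length, ∑ y ∈ T,
              dist (f (y * (l.take (i+1)).prod)) (f (y * (l.take i).prod)) ^ p := by
            rw [← Finset.mul_sum, Finset.sum_comm]
        _ ≤ (n:ℝ) ^ (p - 1) * ∑ _i ∈ Finset.range l.length, Sig := by
            refine mul_le_mul_of_nonneg_left (Finset.sum_le_sum ?_) (by positivity)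
            intro i hi
            have hi' : i < l.length := Finset.mem_range.1 hi
            have hstep : ∀ y : DH,
                dist (f (y * (l.take (i+1)).prod)) (f (y * (l.take i).prod)) ^ p
                = dist (f ((y * (l.take i).prod) * l[i])) (f (y * (l.take i).prod)) ^ p := by
              intro y
              rw [List.prod_take_succ l i hi', ← mul_assoc]
            calc (∑ y ∈ T, dist (f (y * (l.take (i+1)).prod)) (f (y * (l.take i).prod)) ^ p)
                = ∑ y ∈ T, dist (f ((y * (l.take i).prod) * l[i]))
                    (f (y * (l.take i).prod)) ^ p :=
                  Finset.sum_congr rfl fun y _ => hstep y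
              _ = ∑ w ∈ T.image (· * (l.take i).prod), dist (f (w * l[i])) (f w) ^ p :=
                  (Finset.sum_image (f := fun w => dist (f (w * l[i])) (f w) ^ p)
                    (fun x _ y _ h => mul_right_cancel h)).symm
              _ ≤ Sig := key l[i] (hgens _ (List.getElem_mem hi')) _
        _ = (n:ℝ) ^ (p - 1) * ((l.length : ℝ) * Sig) := by
            rw [Finset.sum_const, Finset.card_range, nsmul_eq_mul]
        _ ≤ (n:ℝ) ^ (p - 1) * ((n:ℝ) * Sig) := by
            refine mul_le_mul_of_nonneg_left
              (mul_le_mul_of_nonneg_right (by exact_mod_cast hlen) hSig0) (by positivity)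
        _ = (n:ℝ) ^ p * Sig := by
            rw [← mul_assoc, ← Real.rpow_add_one (ne_of_gt hn0), sub_add_cancel]
    -- outer conversion
    have houter : ∀ y : DH, y ∉ T → (∑ z ∈ Bfin, dist (f (y * z)) (f y) ^ p) = 0 := by
      intro y hy
      refine Finset.sum_eq_zero fun z hz => ?_
      have h1 : f y = m₀ := hnot_s y fun h => hy (Finset.mem_union_left _ h)
      have h2 : f (y * z) = m₀ := by
        by_contra h
        refine hy (Finset.mem_union_right _ (Finset.mem_image.2 ⟨(y * z, z), ?_, ?_⟩))
        · exact Finset.mem_product.2 ⟨hmem_s _ h, hz⟩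
        · simp only
          rw [mul_inv_cancel_right]
      rw [h1, h2, dist_self, Real.zero_rpow hp0]
    have hRHS : (∑' x : DH, (dist (f (x * gA)) (f x) ^ p + dist (f (x * gB)) (f x) ^ p))
        = Sig := by
      refine tsum_eq_sum ?_
      intro x hx
      have h1 : f x = m₀ := hnot_s x fun h =>
        hx (Finset.mem_union_left _ (Finset.mem_union_left _ h))
      have h2 : f (x * gA) = m₀ := by
        by_contra h
        exact hx (Finset.mem_union_left _ (Finset.mem_union_right _
          (Finset.mem_image.2 ⟨x * gA, hmem_s _ h, by rw [mul_inv_cancel_right]⟩)))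
      have h3 : f (x * gB) = m₀ := by
        by_contra h
        exact hx (Finset.mem_union_right _
          (Finset.mem_image.2 ⟨x * gB, hmem_s _ h, by rw [mul_inv_cancel_right]⟩))
      rw [h1, h2, h3, dist_self, Real.zero_rpow hp0, add_zero]
    rw [tsum_congr hinner, tsum_eq_sum houter, hRHS]
    calc (∑ y ∈ T, ∑ z ∈ Bfin, dist (f (y * z)) (f y) ^ p)
        = ∑ z ∈ Bfin, ∑ y ∈ T, dist (f (y * z)) (f y) ^ p := Finset.sum_comm
      _ ≤ ∑ _z ∈ Bfin, (n:ℝ) ^ p * Sig := Finset.sum_le_sum keyz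
      _ = (Bfin.card : ℝ) * ((n:ℝ) ^ p * Sig) := by
          rw [Finset.sum_const, nsmul_eq_mul]
      _ ≤ (27 * (n:ℝ) ^ (4:ℕ)) * ((n:ℝ) ^ p * Sig) := by
          refine mul_le_mul_of_nonneg_right ?_
            (mul_nonneg (Real.rpow_nonneg hn0.le p) hSig0)
          have hsub : Bfin ⊆ boxF n :=
            (Set.Finite.toFinset_subset).2 (ball_subset_box n)
          have h1 : Bfin.card ≤ (boxF n).card := Finset.card_le_card hsub
          have h2 : (boxF n).card ≤ 27 * n ^ 4 := by
            rw [card_boxF]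
            have a1 : 2 * n + 1 ≤ 3 * n := by omega
            have a2 : 2 * n ^ 2 + 1 ≤ 3 * n ^ 2 := by nlinarith
            calc (2 * n + 1) * ((2 * n + 1) * (2 * n ^ 2 + 1))
                ≤ (3 * n) * ((3 * n) * (3 * n ^ 2)) :=
                  Nat.mul_le_mul a1 (Nat.mul_le_mul a1 a2)
              _ = 27 * n ^ 4 := by ring
          calc (Bfin.card : ℝ) ≤ ((27 * n ^ 4 : ℕ) : ℝ) := by exact_mod_cast h1.trans h2
            _ = 27 * (n:ℝ) ^ (4:ℕ) := by push_cast; ring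
      _ = 27 * (n:ℝ) ^ (p + 4) * Sig := by
          rw [Real.rpow_add hn0, show ((4:ℝ)) = ((4:ℕ):ℝ) by norm_num, Real.rpow_natCast]
          ring
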